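/- Bipartite canonical Ramsey theorem: for every n ∈ ℕ there exists N ∈ ℕ such that for every function χ : [N] × [N] → C into an arbitrary set C, there exist subsets X, Y ⊆ [N], each of size n, such that one of the following holds for all x, x' ∈ X and y, y' ∈ Y: (1) χ(x,y) = χ(x',y'); (2) χ(x,y) = χ(x',y') ↔ x = x'; (3) χ(x,y) = χ(x',y') ↔ y = y'; (4) χ(x,y) = χ(x',y') ↔ (x = x' ∧ y = y'). -/
import Mathlib

/-- Ramsey property: every `α`-colouring of increasing `k`-tuples from any finite
set `V ⊆ ℕ` of size at least `N` admits a homogeneous subset of size `m`. -/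
def RP (α : Type) (k N m : ℕ) : Prop :=
  ∀ f : (Fin k → ℕ) → α, ∀ V : Finset ℕ, N ≤ V.card →
    ∃ S : Finset ℕ, S ⊆ V ∧ S.card = m ∧
      ∀ p q : Fin k → ℕ, StrictMono p → StrictMono q →
        (∀ i, p i ∈ S) → (∀ i, q i ∈ S) → f p = f q

theorem ramsey (α : Type) [Fintype α] : ∀ (k m : ℕ), ∃ N, RP α k N m := by
  classical
  intro k
  induction k with
  | zero =>
    intro m
    refine ⟨m, fun f V hV => ?_⟩
    obtain ⟨S, hS, hcard⟩ := Finset.exists_subset_card_eq hV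
    refine ⟨S, hS, hcard, fun p q _ _ _ _ => ?_⟩
    congr 1
    funext i
    exact absurd i.isLt (by omega)
  | succ k ih =>
    -- min-homogeneous sets
    have MH : ∀ t : ℕ, ∃ N, ∀ f : (Fin (k+1) → ℕ) → α, ∀ V : Finset ℕ, N ≤ V.card →
        ∃ S : Finset ℕ, S ⊆ V ∧ S.card = t ∧ ∃ g : ℕ → α,
          ∀ p : Fin (k+1) → ℕ, StrictMono p → (∀ i, p i ∈ S) → f p = g (p 0) := by
      intro t
      induction t with
      | zero =>
        refine ⟨0, fun f V _ => ⟨∅, Finset.empty_subset _, Finset.card_empty,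
          fun _ => f (fun _ => 0), fun p _ hp => absurd (hp 0) (Finset.notMem_empty _)⟩⟩
      | succ t iht =>
        obtain ⟨Nt, hNt⟩ := iht
        obtain ⟨NR, hNR⟩ := ih (max Nt k)
        refine ⟨NR + 1, fun f V hV => ?_⟩
        have hVne : V.Nonempty := Finset.card_pos.mp (by omega)
        set a := V.min' hVne with ha
        have haV : a ∈ V := V.min'_mem _
        have hV' : NR ≤ (V.erase a).card := by
          rw [Finset.card_erase_of_mem haV]; omega
        obtain ⟨W, hWV', hWcard, hWhom⟩ := hNR (fun B => f (Fin.cons a B)) (V.erase a) hV'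
        obtain ⟨S', hS'W, hS'card, g', hg'⟩ := hNt f W (by rw [hWcard]; exact le_max_left _ _)
        have hkW : k ≤ W.card := by rw [hWcard]; exact le_max_right _ _
        set w₀ : Fin k → ℕ := fun i => W.orderEmbOfCardLe hkW i with hw₀
        set γ := f (Fin.cons a w₀) with hγ
        have haS' : a ∉ S' := by
          intro h
          exact (Finset.mem_erase.mp (hWV' (hS'W h))).1 rfl
        refine ⟨insert a S', ?_, ?_, Function.update g' a γ, ?_⟩
        · intro x hx
          rcases Finset.mem_insert.mp hx with h | h
          · exact h ▸ haV
          · exact Finset.erase_subset _ _ (hWV' (hS'W h))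
        · rw [Finset.card_insert_of_notMem haS', hS'card]
        · intro p hp hpS
          by_cases h0 : p 0 = a
          · have htail : ∀ i : Fin k, Fin.tail p i ∈ W := by
              intro i
              have hmem := hpS i.succ
              have hgt : a < p i.succ := by
                rw [← h0]; exact hp (Fin.succ_pos i)
              rcases Finset.mem_insert.mp hmem with h | h
              · omega
              · exact hS'W h
            have hmt : StrictMono (Fin.tail p) := by
              intro i j hij
              exact hp (by simpa using hij)
            have h1 : f p = γ := by
              have : f (Fin.cons a (Fin.tail p)) = f (Fin.cons a w₀) :=
                hWhom (Fin.tail p) w₀ hmt (W.orderEmbOfCardLe hkW).strictMono htail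
                  (fun i => W.orderEmbOfCardLe_mem hkW i)
              calc f p = f (Fin.cons (p 0) (Fin.tail p)) := by rw [Fin.cons_self_tail]
                _ = f (Fin.cons a (Fin.tail p)) := by rw [h0]
                _ = γ := this
            rw [h1, h0, Function.update_self]
          · have hall : ∀ i, p i ∈ S' := by
              intro i
              have hpi := hpS i
              have h1 : a ≤ p 0 := V.min'_le _ (by
                rcases Finset.mem_insert.mp (hpS 0) with h | h
                · exact h ▸ haV
                · exact Finset.erase_subset _ _ (hWV' (hS'W h)))
              have h2 : a < p i := lt_of_lt_of_le (lt_of_le_of_ne h1 (Ne.symm h0))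
                (hp.monotone (Fin.zero_le i))
              rcases Finset.mem_insert.mp hpi with h | h
              · omega
              · exact h
            rw [hg' p hp hall, Function.update_of_ne h0]
    -- pigeonhole on the min-colour
    intro m
    rcases isEmpty_or_nonempty α with hα | hα
    · exact ⟨0, fun f V hV => hα.elim (f (fun _ => 0))⟩
    obtain ⟨N, hN⟩ := MH (Fintype.card α * m)
    refine ⟨N, fun f V hV => ?_⟩
    obtain ⟨S, hSV, hScard, g, hg⟩ := hN f V hV
    have hmul : (Finset.univ : Finset α).card * m ≤ S.card := by
      rw [hScard, Finset.card_univ]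
    obtain ⟨γ, -, hγ⟩ := Finset.exists_le_card_fiber_of_mul_le_card_of_maps_to
      (fun x _ => Finset.mem_univ (g x)) Finset.univ_nonempty hmul
    obtain ⟨T, hT, hTcard⟩ := Finset.exists_subset_card_eq hγ
    have hTS : T ⊆ S := hT.trans (Finset.filter_subset _ _)
    refine ⟨T, hTS.trans hSV, hTcard, ?_⟩
    intro p q hp hq hpT hqT
    have hgp : g (p 0) = γ := (Finset.mem_filter.mp (hT (hpT 0))).2
    have hgq : g (q 0) = γ := (Finset.mem_filter.mp (hT (hqT 0))).2
    rw [hg p hp (fun i => hTS (hpT i)), hg q hq (fun i => hTS (hqT i)), hgp, hgq]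

lemma sm3 {a b c : ℕ} (h1 : a < b) (h2 : b < c) : StrictMono ![a,b,c] := by
  intro i j hij
  fin_cases i <;> fin_cases j <;>
    simp_all [Matrix.cons_val_zero, Matrix.cons_val_one, Matrix.head_cons,
      Matrix.cons_val_two, Matrix.vecTail, Matrix.vecHead] <;> omega

lemma sm4 {a b c d : ℕ} (h1 : a < b) (h2 : b < c) (h3 : c < d) : StrictMono ![a,b,c,d] := by
  intro i j hij
  fin_cases i <;> fin_cases j <;>
    simp_all [Matrix.cons_val_zero, Matrix.cons_val_one, Matrix.head_cons,
      Matrix.cons_val_two, Matrix.cons_val_three, Matrix.vecTail, Matrix.vecHead] <;> omega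

lemma mem3 {S : Finset ℕ} {a b c : ℕ} (ha : a ∈ S) (hb : b ∈ S) (hc : c ∈ S) :
    ∀ i, ![a,b,c] i ∈ S := by
  intro i
  fin_cases i <;> simpa

lemma mem4 {S : Finset ℕ} {a b c d : ℕ} (ha : a ∈ S) (hb : b ∈ S) (hc : c ∈ S) (hd : d ∈ S) :
    ∀ i, ![a,b,c,d] i ∈ S := by
  intro i
  fin_cases i <;> simpa

set_option maxHeartbeats 1000000 in
lemma grid_canonical {C : Type} (ψ : ℕ → ℕ → C) (S : Finset ℕ) (n : ℕ)
    (hcard : S.card = 2*n+5)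
    (hom3 : ∀ p q : Fin 3 → ℕ, StrictMono p → StrictMono q →
      (∀ i, p i ∈ S) → (∀ i, q i ∈ S) →
      ((ψ (p 0) (p 1) = ψ (p 0) (p 2)) ↔ (ψ (q 0) (q 1) = ψ (q 0) (q 2))) ∧
      ((ψ (p 0) (p 2) = ψ (p 1) (p 2)) ↔ (ψ (q 0) (q 2) = ψ (q 1) (q 2))))
    (hom4 : ∀ p q : Fin 4 → ℕ, StrictMono p → StrictMono q →
      (∀ i, p i ∈ S) → (∀ i, q i ∈ S) →
      ((ψ (p 0) (p 2) = ψ (p 1) (p 3)) ↔ (ψ (q 0) (q 2) = ψ (q 1) (q 3))) ∧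
      ((ψ (p 0) (p 3) = ψ (p 1) (p 2)) ↔ (ψ (q 0) (q 3) = ψ (q 1) (q 2)))) :
    ∃ R Cl : Fin n → ℕ, (∀ i, R i ∈ S) ∧ (∀ j, Cl j ∈ S) ∧
      StrictMono R ∧ StrictMono Cl ∧ (∀ i j, R i < Cl j) ∧
      ((∀ i i' j j', ψ (R i) (Cl j) = ψ (R i') (Cl j')) ∨
       (∀ i i' j j', ψ (R i) (Cl j) = ψ (R i') (Cl j') ↔ i = i') ∨
       (∀ i i' j j', ψ (R i) (Cl j) = ψ (R i') (Cl j') ↔ j = j') ∨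
       (∀ i i' j j', ψ (R i) (Cl j) = ψ (R i') (Cl j') ↔ (i = i' ∧ j = j'))) := by
  classical
  set e := S.orderEmbOfFin hcard with he
  have heS : ∀ i, e i ∈ S := fun i => S.orderEmbOfFin_mem hcard i
  have hs : ∃ t : Fin 5 → ℕ, (∀ i, t i ∈ S) ∧
      t 0 < t 1 ∧ t 1 < t 2 ∧ t 2 < t 3 ∧ t 3 < t 4 := by
    refine ⟨fun i => e ⟨(i : ℕ), by omega⟩, fun i => heS _, ?_, ?_, ?_, ?_⟩ <;>
      exact e.strictMono (Fin.mk_lt_mk.mpr (by decide))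
  obtain ⟨t, htS, h01, h12, h23, h34⟩ := hs
  -- the key homogeneity facts in convenient form
  have key3 : ∀ {a b c : ℕ}, a ∈ S → b ∈ S → c ∈ S → a < b → b < c →
      ((ψ a b = ψ a c ↔ ψ (t 0) (t 1) = ψ (t 0) (t 2)) ∧ (ψ a c = ψ b c ↔ ψ (t 0) (t 2) = ψ (t 1) (t 2))) := by
    intro a b c ha hb hc hab hbc
    have h := hom3 ![a,b,c] ![(t 0),(t 1),(t 2)] (sm3 hab hbc) (sm3 h01 h12)
      (mem3 ha hb hc) (mem3 (htS _) (htS _) (htS _))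
    exact h
  have key4 : ∀ {a b c d : ℕ}, a ∈ S → b ∈ S → c ∈ S → d ∈ S → a < b → b < c → c < d →
      ((ψ a c = ψ b d ↔ ψ (t 0) (t 2) = ψ (t 1) (t 3)) ∧ (ψ a d = ψ b c ↔ ψ (t 0) (t 3) = ψ (t 1) (t 2))) := by
    intro a b c d ha hb hc hd hab hbc hcd
    have h := hom4 ![a,b,c,d] ![(t 0),(t 1),(t 2),(t 3)] (sm4 hab hbc hcd) (sm4 h01 h12 h23)
      (mem4 ha hb hc hd) (mem4 (htS _) (htS _) (htS _) (htS _))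
    exact h
  -- uniform row/column lemmas
  have B1' : ∀ {a c c' : ℕ}, a ∈ S → c ∈ S → c' ∈ S → a < c → a < c' →
      (ψ a c = ψ a c' ↔ ((ψ (t 0) (t 1) = ψ (t 0) (t 2)) ∨ c = c')) := by
    intro a c c' ha hc hc' hac hac'
    rcases lt_trichotomy c c' with h | h | h
    · have := (key3 ha hc hc' hac h).1
      constructor
      · exact fun hh => Or.inl (this.mp hh)
      · rintro (hh | hh)
        · exact this.mpr hh
        · rw [hh]
    · rw [h]
      exact ⟨fun _ => Or.inr rfl, fun _ => rfl⟩
    · have := (key3 ha hc' hc hac' h).1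
      constructor
      · exact fun hh => Or.inl (this.mp hh.symm)
      · rintro (hh | hh)
        · exact (this.mpr hh).symm
        · rw [hh]
  have B2' : ∀ {a a' c : ℕ}, a ∈ S → a' ∈ S → c ∈ S → a < c → a' < c →
      (ψ a c = ψ a' c ↔ ((ψ (t 0) (t 2) = ψ (t 1) (t 2)) ∨ a = a')) := by
    intro a a' c ha ha' hc hac ha'c
    rcases lt_trichotomy a a' with h | h | h
    · have := (key3 ha ha' hc h ha'c).2
      constructor
      · exact fun hh => Or.inl (this.mp hh)
      · rintro (hh | hh)
        · exact this.mpr hh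
        · rw [hh]
    · rw [h]
      exact ⟨fun _ => Or.inr rfl, fun _ => rfl⟩
    · have := (key3 ha' ha hc h hac).2
      constructor
      · exact fun hh => Or.inl (this.mp hh.symm)
      · rintro (hh | hh)
        · exact (this.mpr hh).symm
        · rw [hh]
  -- the row and column maps
  refine ⟨fun i => e ⟨(i : ℕ), by omega⟩, fun j => e ⟨n + 5 + (j : ℕ), by omega⟩,
    fun i => heS _, fun j => heS _, ?_, ?_, ?_, ?_⟩
  · intro i j hij
    exact e.strictMono (Fin.mk_lt_mk.mpr hij)
  · intro i j hij
    exact e.strictMono (by simp only [Fin.lt_def]; omega)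
  · intro i j
    exact e.strictMono (by simp only [Fin.lt_def]; omega)
  -- abbreviations for the proof of the disjunction
  set R : Fin n → ℕ := fun i => e ⟨(i : ℕ), by omega⟩ with hRdef
  set Cl : Fin n → ℕ := fun j => e ⟨n + 5 + (j : ℕ), by omega⟩ with hCldef
  have hRS : ∀ i, R i ∈ S := fun i => heS _
  have hClS : ∀ j, Cl j ∈ S := fun j => heS _
  have hRC : ∀ i j, R i < Cl j := fun i j => e.strictMono (by simp only [Fin.lt_def]; omega)
  have hRinj : ∀ {i i' : Fin n}, R i = R i' ↔ i = i' := by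
    intro i i'
    constructor
    · intro h
      have := e.injective h
      exact Fin.ext (by simpa [Fin.ext_iff] using this)
    · intro h; rw [h]
  have hClinj : ∀ {j j' : Fin n}, Cl j = Cl j' ↔ j = j' := by
    intro j j'
    constructor
    · intro h
      have := e.injective h
      exact Fin.ext (by simpa [Fin.ext_iff] using this)
    · intro h; rw [h]
  by_cases hb1 : ψ (t 0) (t 1) = ψ (t 0) (t 2) <;> by_cases hb2 : ψ (t 0) (t 2) = ψ (t 1) (t 2)
  · -- constant
    refine Or.inl fun i i' j j' => ?_
    have e1 : ψ (R i) (Cl j) = ψ (R i) (Cl j') :=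
      (B1' (hRS i) (hClS j) (hClS j') (hRC i j) (hRC i j')).mpr (Or.inl hb1)
    have e2 : ψ (R i) (Cl j') = ψ (R i') (Cl j') :=
      (B2' (hRS i) (hRS i') (hClS j') (hRC i j') (hRC i' j')).mpr (Or.inl hb2)
    exact e1.trans e2
  · -- depends on the row only
    refine Or.inr (Or.inl fun i i' j j' => ?_)
    rw [← hRinj]
    constructor
    · intro h
      have e1 : ψ (R i) (Cl j) = ψ (R i) (Cl j') :=
        (B1' (hRS i) (hClS j) (hClS j') (hRC i j) (hRC i j')).mpr (Or.inl hb1)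
      have e2 : ψ (R i) (Cl j') = ψ (R i') (Cl j') := e1.symm.trans h
      rcases (B2' (hRS i) (hRS i') (hClS j') (hRC i j') (hRC i' j')).mp e2 with hh | hh
      · exact absurd hh hb2
      · exact hh
    · intro h
      rw [h]
      exact (B1' (hRS i') (hClS j) (hClS j') (hRC i' j) (hRC i' j')).mpr (Or.inl hb1)
  · -- depends on the column only
    refine Or.inr (Or.inr (Or.inl fun i i' j j' => ?_))
    rw [← hClinj]
    constructor
    · intro h
      have e1 : ψ (R i) (Cl j) = ψ (R i') (Cl j) :=
        (B2' (hRS i) (hRS i') (hClS j) (hRC i j) (hRC i' j)).mpr (Or.inl hb2)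
      have e2 : ψ (R i') (Cl j) = ψ (R i') (Cl j') := e1.symm.trans h
      rcases (B1' (hRS i') (hClS j) (hClS j') (hRC i' j) (hRC i' j')).mp e2 with hh | hh
      · exact absurd hh hb1
      · exact hh
    · intro h
      rw [h]
      exact (B2' (hRS i) (hRS i') (hClS j') (hRC i j') (hRC i' j')).mpr (Or.inl hb2)
  · -- injective case
    have h34' : (t 3) ≠ (t 4) := ne_of_lt h34
    have hg1 : ¬(ψ (t 0) (t 2) = ψ (t 1) (t 3)) := by
      intro hg
      have i1 : ψ (t 0) (t 2) = ψ (t 1) (t 4) :=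
        (key4 (htS _) (htS _) (htS _) (htS _) h01 h12 (h23.trans h34)).1.mpr hg
      have i2 : ψ (t 1) (t 3) = ψ (t 1) (t 4) := hg.symm.trans i1
      rcases (B1' (htS _) (htS _) (htS _) (h12.trans h23) (h12.trans (h23.trans h34))).mp i2
        with hh | hh
      · exact hb1 hh
      · exact h34' hh
    have hg2 : ¬(ψ (t 0) (t 3) = ψ (t 1) (t 2)) := by
      intro hg
      have i1 : ψ (t 0) (t 4) = ψ (t 1) (t 2) :=
        (key4 (htS _) (htS _) (htS _) (htS _) h01 h12 (h23.trans h34)).2.mpr hg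
      have i2 : ψ (t 0) (t 3) = ψ (t 0) (t 4) := hg.trans i1.symm
      rcases (B1' (htS _) (htS _) (htS _) (h01.trans (h12.trans h23))
        (h01.trans (h12.trans (h23.trans h34)))).mp i2 with hh | hh
      · exact hb1 hh
      · exact h34' hh
    have NEQ : ∀ {a a' c c' : ℕ}, a ∈ S → a' ∈ S → c ∈ S → c' ∈ S →
        a < c → a < c' → a' < c → a' < c' → a ≠ a' → c ≠ c' → ψ a c ≠ ψ a' c' := by
      intro a a' c c' ha ha' hc hc' hac hac' ha'c ha'c' haa hcc
      rcases lt_or_gt_of_ne haa with h1 | h1 <;> rcases lt_or_gt_of_ne hcc with h2 | h2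
      · exact fun hh => hg1 ((key4 ha ha' hc hc' h1 ha'c h2).1.mp hh)
      · exact fun hh => hg2 ((key4 ha ha' hc' hc h1 ha'c' h2).2.mp hh)
      · exact fun hh => hg2 ((key4 ha' ha hc hc' h1 hac h2).2.mp hh.symm)
      · exact fun hh => hg1 ((key4 ha' ha hc' hc h1 hac' h2).1.mp hh.symm)
    refine Or.inr (Or.inr (Or.inr fun i i' j j' => ?_))
    constructor
    · intro h
      by_cases haa : R i = R i'
      · refine ⟨hRinj.mp haa, ?_⟩
        rw [← haa] at h
        rcases (B1' (hRS i) (hClS j) (hClS j') (hRC i j) (hRC i j')).mp h with hh | hh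
        · exact absurd hh hb1
        · exact hClinj.mp hh
      · by_cases hcc : Cl j = Cl j'
        · rw [← hcc] at h
          rcases (B2' (hRS i) (hRS i') (hClS j) (hRC i j) (hRC i' j)).mp h with hh | hh
          · exact absurd hh hb2
          · exact absurd hh haa
        · exact absurd h (NEQ (hRS i) (hRS i') (hClS j) (hClS j')
            (hRC i j) (hRC i j') (hRC i' j) (hRC i' j') haa hcc)
    · rintro ⟨h1, h2⟩
      rw [h1, h2]

/-- Bipartite canonical Ramsey theorem: for every `n` there is `N` such that for
every colouring `χ : [N] × [N] → C` into an arbitrary set of colours there are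
subsets `X, Y` of size `n` on which `χ` is canonical of one of the four types. -/
theorem stmt2 (n : ℕ) :
    ∃ N : ℕ, ∀ (C : Type) (χ : Fin N × Fin N → C),
      ∃ X Y : Finset (Fin N), X.card = n ∧ Y.card = n ∧
        ((∀ x ∈ X, ∀ x' ∈ X, ∀ y ∈ Y, ∀ y' ∈ Y, χ (x, y) = χ (x', y')) ∨
         (∀ x ∈ X, ∀ x' ∈ X, ∀ y ∈ Y, ∀ y' ∈ Y, (χ (x, y) = χ (x', y') ↔ x = x')) ∨
         (∀ x ∈ X, ∀ x' ∈ X, ∀ y ∈ Y, ∀ y' ∈ Y, (χ (x, y) = χ (x', y') ↔ y = y')) ∨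
         (∀ x ∈ X, ∀ x' ∈ X, ∀ y ∈ Y, ∀ y' ∈ Y,
            (χ (x, y) = χ (x', y') ↔ (x = x' ∧ y = y')))) := by
  classical
  obtain ⟨N₃, hN₃⟩ := ramsey (Bool × Bool) 3 (2*n+5)
  obtain ⟨N₄, hN₄⟩ := ramsey (Bool × Bool) 4 N₃
  refine ⟨N₄ + 1, ?_⟩
  intro C χ
  have hM0 : 0 < N₄ + 1 := Nat.succ_pos _
  -- the colouring pulled back to ℕ
  set ψ : ℕ → ℕ → C := fun a b =>
    χ (⟨a % (N₄+1), Nat.mod_lt _ hM0⟩, ⟨b % (N₄+1), Nat.mod_lt _ hM0⟩) with hψdef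
  obtain ⟨S₁, hS₁V, hS₁card, hom4⟩ := hN₄
    (fun v => (decide (ψ (v 0) (v 2) = ψ (v 1) (v 3)), decide (ψ (v 0) (v 3) = ψ (v 1) (v 2))))
    (Finset.range (N₄+1)) (by rw [Finset.card_range]; omega)
  obtain ⟨S, hSS₁, hScard, hom3⟩ := hN₃
    (fun v => (decide (ψ (v 0) (v 1) = ψ (v 0) (v 2)), decide (ψ (v 0) (v 2) = ψ (v 1) (v 2))))
    S₁ (le_of_eq hS₁card.symm)
  have hom3' : ∀ p q : Fin 3 → ℕ, StrictMono p → StrictMono q →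
      (∀ i, p i ∈ S) → (∀ i, q i ∈ S) →
      ((ψ (p 0) (p 1) = ψ (p 0) (p 2)) ↔ (ψ (q 0) (q 1) = ψ (q 0) (q 2))) ∧
      ((ψ (p 0) (p 2) = ψ (p 1) (p 2)) ↔ (ψ (q 0) (q 2) = ψ (q 1) (q 2))) := by
    intro p q hp hq hpS hqS
    have h := hom3 p q hp hq hpS hqS
    exact ⟨decide_eq_decide.mp (congrArg Prod.fst h), decide_eq_decide.mp (congrArg Prod.snd h)⟩
  have hom4' : ∀ p q : Fin 4 → ℕ, StrictMono p → StrictMono q →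
      (∀ i, p i ∈ S) → (∀ i, q i ∈ S) →
      ((ψ (p 0) (p 2) = ψ (p 1) (p 3)) ↔ (ψ (q 0) (q 2) = ψ (q 1) (q 3))) ∧
      ((ψ (p 0) (p 3) = ψ (p 1) (p 2)) ↔ (ψ (q 0) (q 3) = ψ (q 1) (q 2))) := by
    intro p q hp hq hpS hqS
    have h := hom4 p q hp hq (fun i => hSS₁ (hpS i)) (fun i => hSS₁ (hqS i))
    exact ⟨decide_eq_decide.mp (congrArg Prod.fst h), decide_eq_decide.mp (congrArg Prod.snd h)⟩
  obtain ⟨R, Cl, hRS, hClS, hRmono, hClmono, hRC, hdisj⟩ :=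
    grid_canonical ψ S n hScard hom3' hom4'
  have hRlt : ∀ i, R i < N₄ + 1 := fun i => Finset.mem_range.mp (hS₁V (hSS₁ (hRS i)))
  have hCllt : ∀ j, Cl j < N₄ + 1 := fun j => Finset.mem_range.mp (hS₁V (hSS₁ (hClS j)))
  set u : Fin n → Fin (N₄+1) := fun i => ⟨R i, hRlt i⟩ with hu
  set v : Fin n → Fin (N₄+1) := fun j => ⟨Cl j, hCllt j⟩ with hv
  have huinj : Function.Injective u := by
    intro i i' h
    exact hRmono.injective (by simpa [hu, Fin.ext_iff] using h)
  have hvinj : Function.Injective v := by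
    intro j j' h
    exact hClmono.injective (by simpa [hv, Fin.ext_iff] using h)
  have hui : ∀ {i i' : Fin n}, i = i' ↔ u i = u i' :=
    fun {i i'} => ⟨fun h => by rw [h], fun h => huinj h⟩
  have hvj : ∀ {j j' : Fin n}, j = j' ↔ v j = v j' :=
    fun {j j'} => ⟨fun h => by rw [h], fun h => hvinj h⟩
  have hψχ : ∀ i j, ψ (R i) (Cl j) = χ (u i, v j) := by
    intro i j
    have h1 : (⟨R i % (N₄+1), Nat.mod_lt _ hM0⟩ : Fin (N₄+1)) = u i :=
      Fin.ext (by simp [hu, Nat.mod_eq_of_lt (hRlt i)])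
    have h2 : (⟨Cl j % (N₄+1), Nat.mod_lt _ hM0⟩ : Fin (N₄+1)) = v j :=
      Fin.ext (by simp [hv, Nat.mod_eq_of_lt (hCllt j)])
    show χ (⟨R i % (N₄+1), Nat.mod_lt _ hM0⟩, ⟨Cl j % (N₄+1), Nat.mod_lt _ hM0⟩) = χ (u i, v j)
    rw [h1, h2]
  refine ⟨Finset.image u Finset.univ, Finset.image v Finset.univ, ?_, ?_, ?_⟩
  · rw [Finset.card_image_of_injective _ huinj, Finset.card_univ, Fintype.card_fin]
  · rw [Finset.card_image_of_injective _ hvinj, Finset.card_univ, Fintype.card_fin]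
  have memX : ∀ {x}, x ∈ Finset.image u Finset.univ → ∃ i, u i = x := by
    intro x hx
    obtain ⟨i, -, h⟩ := Finset.mem_image.mp hx
    exact ⟨i, h⟩
  have memY : ∀ {y}, y ∈ Finset.image v Finset.univ → ∃ j, v j = y := by
    intro y hy
    obtain ⟨j, -, h⟩ := Finset.mem_image.mp hy
    exact ⟨j, h⟩
  rcases hdisj with h | h | h | h
  · refine Or.inl ?_
    intro x hx x' hx' y hy y' hy'
    obtain ⟨i, rfl⟩ := memX hx
    obtain ⟨i', rfl⟩ := memX hx'
    obtain ⟨j, rfl⟩ := memY hy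
    obtain ⟨j', rfl⟩ := memY hy'
    rw [← hψχ, ← hψχ]
    exact h i i' j j'
  · refine Or.inr (Or.inl ?_)
    intro x hx x' hx' y hy y' hy'
    obtain ⟨i, rfl⟩ := memX hx
    obtain ⟨i', rfl⟩ := memX hx'
    obtain ⟨j, rfl⟩ := memY hy
    obtain ⟨j', rfl⟩ := memY hy'
    rw [← hψχ, ← hψχ]
    exact (h i i' j j').trans hui
  · refine Or.inr (Or.inr (Or.inl ?_))
    intro x hx x' hx' y hy y' hy'
    obtain ⟨i, rfl⟩ := memX hx
    obtain ⟨i', rfl⟩ := memX hx'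
    obtain ⟨j, rfl⟩ := memY hy
    obtain ⟨j', rfl⟩ := memY hy'
    rw [← hψχ, ← hψχ]
    exact (h i i' j j').trans hvj
  · refine Or.inr (Or.inr (Or.inr ?_))
    intro x hx x' hx' y hy y' hy'
    obtain ⟨i, rfl⟩ := memX hx
    obtain ⟨i', rfl⟩ := memX hx'
    obtain ⟨j, rfl⟩ := memY hy
    obtain ⟨j', rfl⟩ := memY hy'
    rw [← hψχ, ← hψχ]
    exact (h i i' j j').trans (and_congr hui hvj)
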